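/- The operator T_0 satisfies the quadratic Hecke relation (T_0 + q^{-1}cd)(T_0 + 1) = 0 as an operator on the space of Laurent polynomials in z. -/

import Mathlib

open scoped BigOperators

noncomputable section

/-- The field of rational functions over ℂ, in which Laurent polynomials live. -/
local notation "F" => RatFunc ℂ

/-- Scalar constants in `F`. -/
def Cc (x : ℂ) : F := RatFunc.C x

/-- The variable `z`. -/
def Xv : F := RatFunc.X

/-- Substitution `z ↦ t` in a rational function (well defined since the
substitution points used here are transcendental over ℂ). -/
def subst (t : F) (f : F) : F := RatFunc.eval (RatFunc.C) t f

/-- `f` is a Laurent polynomial in `z`. -/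
def IsLaurent (f : F) : Prop :=
  ∃ (p : Polynomial ℂ) (n : ℕ), f = algebraMap (Polynomial ℂ) F p / Xv ^ n

/-- The DAHA operator `T₁` of the basic representation. -/
def T1op (a b : ℂ) (f : F) : F :=
  ((Cc a + Cc b) * Xv - (1 + Cc a * Cc b)) / (1 - Xv ^ 2) * f
    + ((1 - Cc a * Xv) * (1 - Cc b * Xv)) / (1 - Xv ^ 2) * subst Xv⁻¹ f

/-- The DAHA operator `T₀` of the basic representation. -/
def T0op (q c d : ℂ) (f : F) : F :=
  (Cc q)⁻¹ * Xv * ((Cc c * Cc d + Cc q) * Xv - (Cc c + Cc d) * Cc q) / (Cc q - Xv ^ 2) * f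
    - ((Cc c - Xv) * (Cc d - Xv)) / (Cc q - Xv ^ 2) * subst (Cc q * Xv⁻¹) f

/-- The inverse of `T₁`: `T₁⁻¹ = -(ab)⁻¹T₁ - (1 + (ab)⁻¹)`. -/
def T1inv (a b : ℂ) (f : F) : F :=
  -(Cc a * Cc b)⁻¹ * T1op a b f - (1 + (Cc a * Cc b)⁻¹) * f

/-- The inverse of `T₀`: `T₀⁻¹ = -q(cd)⁻¹T₀ - (1 + q(cd)⁻¹)`. -/
def T0inv (q c d : ℂ) (f : F) : F :=
  -(Cc q * (Cc c * Cc d)⁻¹) * T0op q c d f - (1 + Cc q * (Cc c * Cc d)⁻¹) * f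

/-- `Y = T₁T₀`. -/
def Yop (q a b c d : ℂ) (f : F) : F := T1op a b (T0op q c d f)

/-- `Y⁻¹ = T₀⁻¹T₁⁻¹`. -/
def Yinv (q a b c d : ℂ) (f : F) : F := T0inv q c d (T1inv a b f)

/-- `D = Y + q⁻¹abcd·Y⁻¹`. -/
def Dop (q a b c d : ℂ) (f : F) : F :=
  Yop q a b c d f + Cc (q⁻¹ * (a * b * c * d)) * Yinv q a b c d f

/-- The Askey–Wilson second order q-difference operator `D_sym`. -/
def DsymOp (q a b c d : ℂ) (f : F) : F :=
  ((1 - Cc a * Xv) * (1 - Cc b * Xv) * (1 - Cc c * Xv) * (1 - Cc d * Xv)) /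
      ((1 - Xv ^ 2) * (1 - Cc q * Xv ^ 2)) * (subst (Cc q * Xv) f - f)
    + ((Cc a - Xv) * (Cc b - Xv) * (Cc c - Xv) * (Cc d - Xv)) /
      ((1 - Xv ^ 2) * (Cc q - Xv ^ 2)) * (subst ((Cc q)⁻¹ * Xv) f - f)
    + (1 + (Cc q)⁻¹ * Cc a * Cc b * Cc c * Cc d) * f

/-- q-Pochhammer symbol `(x;q)_k`. -/
def qPoch (x q : ℂ) (k : ℕ) : ℂ := ∏ j ∈ Finset.range k, (1 - x * q ^ j)

/-- The monic Askey–Wilson Laurent polynomial `P_n[z;a,b,c,d|q]`. -/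
def AWP (q a b c d : ℂ) (n : ℕ) : F :=
  Cc (a⁻¹ ^ n) * ∑ k ∈ Finset.range (n + 1),
    Cc (qPoch (q⁻¹ ^ n) q k * qPoch (a * b * q ^ k) q (n - k) * qPoch (a * c * q ^ k) q (n - k)
        * qPoch (a * d * q ^ k) q (n - k) * q ^ k
        / (qPoch q q k * qPoch (a * b * c * d * q ^ (n + k) / q) q (n - k)))
      * (∏ j ∈ Finset.range k, (1 - Cc a * Xv * Cc (q ^ j)))
      * (∏ j ∈ Finset.range k, (1 - Cc a * Xv⁻¹ * Cc (q ^ j)))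

/-- `Q_n[z] := (ab)⁻¹ z⁻¹ (1-az)(1-bz) P_{n-1}[z;qa,qb,c,d|q]`. -/
def Qpoly (q a b c d : ℂ) (n : ℕ) : F :=
  (Cc (a * b))⁻¹ * Xv⁻¹ * (1 - Cc a * Xv) * (1 - Cc b * Xv) *
    AWP q (q * a) (q * b) c d (n - 1)

/-- Elementary symmetric polynomials in a,b,c,d. -/
def esym1 (a b c d : ℂ) : ℂ := a + b + c + d
def esym2 (a b c d : ℂ) : ℂ := a*b + a*c + b*c + a*d + b*d + c*d
def esym3 (a b c d : ℂ) : ℂ := a*b*c + a*b*d + a*c*d + b*c*d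
def esym4 (a b c d : ℂ) : ℂ := a*b*c*d


section HeckeAux
open Polynomial

open Polynomial

lemma Cc_ne_zero {x : ℂ} (hx : x ≠ 0) : Cc x ≠ 0 := by
  intro h
  exact hx (RingHom.injective (RatFunc.C (K := ℂ)) (by simpa [Cc] using h))

lemma Xv_ne_zero : Xv ≠ 0 := RatFunc.X_ne_zero

lemma t_transcendental {q : ℂ} (hq : q ≠ 0) : Transcendental ℂ (Cc q * Xv⁻¹) := by
  rw [transcendental_iff]
  intro p hp
  by_contra hp0
  set n := p.natDegree with hn
  have hmain : Xv ^ n * Polynomial.aeval (Cc q * Xv⁻¹) p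
      = algebraMap (Polynomial ℂ) F (∑ i ∈ Finset.range (n + 1),
          Polynomial.C (p.coeff i * q ^ i) * Polynomial.X ^ (n - i)) := by
    rw [Polynomial.aeval_eq_sum_range, Finset.mul_sum, map_sum]
    refine Finset.sum_congr rfl fun i hi => ?_
    rw [Finset.mem_range, Nat.lt_succ_iff] at hi
    rw [map_mul, map_pow, RatFunc.algebraMap_C, RatFunc.algebraMap_X]
    rw [Algebra.smul_def, RatFunc.algebraMap_eq_C]
    rw [mul_pow, inv_pow]
    have hxp : RatFunc.X ^ n * ((RatFunc.X : F) ^ i)⁻¹ = RatFunc.X ^ (n - i) :=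
      (pow_sub₀ _ Xv_ne_zero hi).symm
    simp only [Cc, Xv, map_mul, map_pow]
    rw [← hxp]
    ring
  rw [hp, mul_zero] at hmain
  have hps : (∑ i ∈ Finset.range (n + 1),
      Polynomial.C (p.coeff i * q ^ i) * Polynomial.X ^ (n - i)) = 0 := by
    by_contra h0
    exact RatFunc.algebraMap_ne_zero h0 hmain.symm
  have hc0 : (∑ i ∈ Finset.range (n + 1),
      Polynomial.C (p.coeff i * q ^ i) * Polynomial.X ^ (n - i)).coeff 0 = p.coeff n * q ^ n := by
    rw [Polynomial.finset_sum_coeff]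
    rw [Finset.sum_eq_single n]
    · rw [Nat.sub_self, pow_zero, mul_one, Polynomial.coeff_C]
      simp
    · intro i hi hne
      rw [Finset.mem_range, Nat.lt_succ_iff] at hi
      have : n - i ≠ 0 := Nat.sub_ne_zero_of_lt (lt_of_le_of_ne hi hne)
      simp [Polynomial.coeff_X_pow, Ne.symm this]
    · intro h; simp at h
  rw [hps] at hc0
  have : p.coeff n = 0 := by
    have := hc0.symm
    rcases mul_eq_zero.mp this with h | h
    · exact h
    · exact absurd h (pow_ne_zero _ hq)
  exact hp0 (Polynomial.leadingCoeff_eq_zero.mp this)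

def Sop (q : ℂ) (hq : q ≠ 0) : RatFunc ℂ →+* RatFunc ℂ :=
  RatFunc.liftRingHom (Polynomial.eval₂RingHom RatFunc.C (Cc q * Xv⁻¹)) (by
    intro p hp
    rw [mem_nonZeroDivisors_iff_ne_zero] at hp
    rw [Submonoid.mem_comap, mem_nonZeroDivisors_iff_ne_zero]
    intro h0
    exact hp (transcendental_iff.mp (t_transcendental hq) p
      (by rwa [Polynomial.aeval_def, RatFunc.algebraMap_eq_C, ← Polynomial.coe_eval₂RingHom])))

lemma subst_eq_Sop (q : ℂ) (hq : q ≠ 0) (f : F) : subst (Cc q * Xv⁻¹) f = Sop q hq f := by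
  rw [Sop, RatFunc.liftRingHom_apply, subst, RatFunc.eval]
  simp [Polynomial.coe_eval₂RingHom]

lemma Sop_algebraMap (q : ℂ) (hq : q ≠ 0) (p : Polynomial ℂ) :
    Sop q hq (algebraMap (Polynomial ℂ) F p) = p.eval₂ RatFunc.C (Cc q * Xv⁻¹) := by
  have h := RatFunc.liftRingHom_apply_div
    (Polynomial.eval₂RingHom RatFunc.C (Cc q * Xv⁻¹)) (by
      intro p hp
      rw [mem_nonZeroDivisors_iff_ne_zero] at hp
      rw [Submonoid.mem_comap, mem_nonZeroDivisors_iff_ne_zero]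
      intro h0
      exact hp (transcendental_iff.mp (t_transcendental hq) p
        (by rwa [Polynomial.aeval_def, RatFunc.algebraMap_eq_C, ← Polynomial.coe_eval₂RingHom])))
    p 1
  simpa [Sop] using h

lemma Sop_C (q : ℂ) (hq : q ≠ 0) (x : ℂ) : Sop q hq (Cc x) = Cc x := by
  have h1 : (Cc x : F) = algebraMap (Polynomial ℂ) F (Polynomial.C x) :=
    (RatFunc.algebraMap_C x).symm
  conv_lhs => rw [h1]
  rw [Sop_algebraMap, Polynomial.eval₂_C]
  rfl

lemma Sop_X (q : ℂ) (hq : q ≠ 0) : Sop q hq Xv = Cc q * Xv⁻¹ := by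
  have h1 : (Xv : F) = algebraMap (Polynomial ℂ) F Polynomial.X := (RatFunc.algebraMap_X).symm
  conv_lhs => rw [h1]
  rw [Sop_algebraMap, Polynomial.eval₂_X]

lemma Sop_Sop (q : ℂ) (hq : q ≠ 0) (f : F) : Sop q hq (Sop q hq f) = f := by
  have key : ∀ p : Polynomial ℂ, Sop q hq (Sop q hq (algebraMap (Polynomial ℂ) F p))
      = algebraMap (Polynomial ℂ) F p := by
    intro p
    rw [Sop_algebraMap, Polynomial.hom_eval₂]
    have hC : (Sop q hq).comp RatFunc.C = RatFunc.C := RingHom.ext fun x => Sop_C q hq x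
    have ht : Sop q hq (Cc q * Xv⁻¹) = Xv := by
      rw [map_mul, map_inv₀, Sop_C, Sop_X]
      rw [mul_inv, inv_inv, ← mul_assoc, mul_inv_cancel₀ (Cc_ne_zero hq), one_mul]
    rw [hC, ht]
    conv_lhs => rw [show (Xv : F) = algebraMap (Polynomial ℂ) F Polynomial.X from
      (RatFunc.algebraMap_X).symm]
    rw [show Polynomial.eval₂ RatFunc.C (algebraMap (Polynomial ℂ) F Polynomial.X) p
        = Polynomial.aeval (algebraMap (Polynomial ℂ) F Polynomial.X) p by
      rw [Polynomial.aeval_def, RatFunc.algebraMap_eq_C]]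
    rw [Polynomial.aeval_algebraMap_apply]
    simp
  conv_lhs => rw [← RatFunc.num_div_denom f, map_div₀, map_div₀, key, key]
  exact RatFunc.num_div_denom f

lemma CXsq_ne (q : ℂ) : Cc q - Xv ^ 2 ≠ 0 := by
  have h1 : (Cc q - Xv ^ 2 : F)
      = algebraMap (Polynomial ℂ) F (Polynomial.C q - Polynomial.X ^ 2) := by
    rw [map_sub, map_pow, RatFunc.algebraMap_C, RatFunc.algebraMap_X]; rfl
  rw [h1]
  apply RatFunc.algebraMap_ne_zero
  intro h
  have := congrArg (fun p => Polynomial.coeff p 2) h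
  simp [Polynomial.coeff_X_pow] at this

end HeckeAux

set_option maxHeartbeats 1000000 in

theorem stmt2 (q a b c d : ℂ) (hq : q ≠ 0) (hroot : ∀ m : ℕ, 1 ≤ m → q ^ m ≠ 1)
    (ha : a ≠ 0) (hb : b ≠ 0) (hc : c ≠ 0) (hd : d ≠ 0) :
    ∀ f : RatFunc ℂ, IsLaurent f →
      T0op q c d (T0op q c d f + f) + Cc (q⁻¹ * (c * d)) * (T0op q c d f + f) = 0 := by
  intro f _
  have hsub : ∀ g : F, subst (Cc q * Xv⁻¹) g = Sop q hq g := fun g => subst_eq_Sop q hq g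
  have hX : (Xv : F) ≠ 0 := Xv_ne_zero
  have hQ : (Cc q : F) ≠ 0 := Cc_ne_zero hq
  have hD : (Cc q - Xv ^ 2 : F) ≠ 0 := CXsq_ne q
  set A : F := (Cc q)⁻¹ * Xv * ((Cc c * Cc d + Cc q) * Xv - (Cc c + Cc d) * Cc q) / (Cc q - Xv ^ 2)
    with hA
  set B : F := -(((Cc c - Xv) * (Cc d - Xv)) / (Cc q - Xv ^ 2)) with hB
  set k : F := Cc (q⁻¹ * (c * d)) with hk
  have hkk : k = (Cc q)⁻¹ * (Cc c * Cc d) := by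
    rw [hk]; simp only [Cc, map_mul, map_inv₀]
  have Tform : ∀ h : F, T0op q c d h = A * h + B * Sop q hq h := by
    intro h
    rw [T0op, hsub, hA, hB]
    ring
  set g : F := Sop q hq f with hg
  set SA : F := Sop q hq A with hSA'
  set SB : F := Sop q hq B with hSB'
  have hrw : (Cc q - (Cc q * Xv⁻¹) ^ 2 : F) = -Cc q * (Cc q - Xv ^ 2) / Xv ^ 2 := by
    field_simp
    ring
  have hSA : SA = (Cc q)⁻¹ * (Cc q * Xv⁻¹) *
      ((Cc c * Cc d + Cc q) * (Cc q * Xv⁻¹) - (Cc c + Cc d) * Cc q) /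
      (Cc q - (Cc q * Xv⁻¹) ^ 2) := by
    rw [hSA', hA]
    simp only [map_div₀, map_mul, map_sub, map_add, map_pow, map_inv₀, Sop_C, Sop_X]
  have hSB : SB = -(((Cc c - (Cc q * Xv⁻¹)) * (Cc d - (Cc q * Xv⁻¹))) /
      (Cc q - (Cc q * Xv⁻¹) ^ 2)) := by
    rw [hSB', hB]
    simp only [map_neg, map_div₀, map_mul, map_sub, map_pow, map_inv₀, Sop_C, Sop_X]
  have hden : (-Cc q * (Cc q - Xv ^ 2) / Xv ^ 2 : F) ≠ 0 :=
    div_ne_zero (mul_ne_zero (neg_ne_zero.mpr hQ) hD) (pow_ne_zero 2 hX)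
  have hSA2 : SA = (-(Cc c * Cc d + Cc q - (Cc c + Cc d) * Xv)) / (Cc q - Xv ^ 2) := by
    rw [hSA, hrw, div_eq_div_iff hden hD]
    field_simp
  have hSB2 : SB = (Cc c * Xv - Cc q) * (Cc d * Xv - Cc q) / (Cc q * (Cc q - Xv ^ 2)) := by
    rw [hSB, neg_eq_iff_eq_neg, ← neg_div]
    rw [hrw, div_eq_div_iff hden (mul_ne_zero hQ hD)]
    field_simp
  have LA : A + SA + 1 + k = 0 := by
    rw [hA, hSA2, hkk]
    field_simp
    ring
  have hE : (Cc q * (Cc q - Xv ^ 2) : F) ≠ 0 := mul_ne_zero hQ hD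
  have hEE : ((Cc q * (Cc q - Xv ^ 2)) * (Cc q * (Cc q - Xv ^ 2)) : F) ≠ 0 := mul_ne_zero hE hE
  have e1 : A = Xv * ((Cc c * Cc d + Cc q) * Xv - (Cc c + Cc d) * Cc q) /
      (Cc q * (Cc q - Xv ^ 2)) := by
    rw [hA, div_eq_div_iff hD hE]
    field_simp
  have e2 : B = (-(Cc q * (Cc c - Xv) * (Cc d - Xv))) / (Cc q * (Cc q - Xv ^ 2)) := by
    rw [hB, neg_eq_iff_eq_neg, ← neg_div, neg_neg, div_eq_div_iff hD hE]
    ring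
  have e4 : k = Cc c * Cc d * (Cc q - Xv ^ 2) / (Cc q * (Cc q - Xv ^ 2)) := by
    rw [hkk, inv_mul_eq_div, div_eq_div_iff hQ hE]
    ring
  have LB : A * A + B * SB + (1 + k) * A + k = 0 := by
    rw [e1, e2, hSB2, e4]
    rw [div_mul_div_comm, div_mul_div_comm]
    rw [show (1 : F) = (Cc q * (Cc q - Xv ^ 2)) / (Cc q * (Cc q - Xv ^ 2)) from (div_self hE).symm]
    rw [← add_div, ← add_div, div_mul_div_comm, ← add_div]
    rw [div_add_div _ _ hEE hE, _root_.div_eq_zero_iff]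
    left
    ring
  have hSexp : Sop q hq (A * f + B * g + f) = SA * g + SB * f + g := by
    rw [map_add, map_add, map_mul, map_mul, hg, Sop_Sop, ← hSA', ← hSB', ← hg]
  rw [Tform f, ← hg, Tform (A * f + B * g + f), hSexp]
  linear_combination f * LB + B * g * LA


end
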